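/- arXiv:2206.12569 — 5 statements merged into one kernel-verified Lean document; each statement's English description precedes it below -/
import Mathlib

section
/- Warm-start equals cold-start for kernel regression, two-dataset case (inductive step of Theorem 1): Let S and T be finite subsets of X with S ⊆ T, and assume the Gram matrices K_S and K_T are invertible. Let f₀ : X → ℝ be an arbitrary function, let f₁ be the kernel-regression update of f₀ on S, and let f₂ be the kernel-regression update of f₁ on T. Then for every x ∈ X, f₂(x) equals the kernel-regression update of f₀ on T evaluated at x; that is, warm-starting from the model trained on S and then training on T gives exactly the same predictor as training on T from scratch. -/
open Matrix

/-- The Gram matrix of a kernel `K` on a finite set `S` of inputs. -/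
def gramMatrix {X : Type*} (K : X → X → ℝ) (S : Finset X) : Matrix S S ℝ :=
  Matrix.of fun i j => K i j

/-- The kernel-regression update of a base predictor `f` on the finite labeled set
`{(x, Y x) : x ∈ S}`: this is the result of retraining an infinitely wide network,
warm-started from `f`, on that dataset (eq. (9) of the paper). -/
noncomputable def krUpdate {X : Type*} [DecidableEq X] (K : X → X → ℝ) (Y : X → ℝ)
    (f : X → ℝ) (S : Finset X) : X → ℝ :=
  fun x => f x + (fun j : S => K x j) ⬝ᵥ (gramMatrix K S)⁻¹.mulVec (fun j : S => Y j - f j)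

/-- Warm-start equals cold-start for kernel regression, two-dataset case:
training on `S` and then retraining on `T ⊇ S` gives the same predictor as
training on `T` from scratch. -/
theorem warm_start_eq_cold_start_two {X : Type*} [DecidableEq X]
    (K : X → X → ℝ) (Y : X → ℝ) (S T : Finset X) (hST : S ⊆ T)
    (hS : IsUnit (gramMatrix K S).det) (hT : IsUnit (gramMatrix K T).det)
    (f₀ : X → ℝ) :
    ∀ x : X, krUpdate K Y (krUpdate K Y f₀ S) T x = krUpdate K Y f₀ T x := by
  intro x
  set v : S → ℝ := (gramMatrix K S)⁻¹.mulVec (fun j : S => Y j - f₀ j) with hv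
  set w : T → ℝ := fun j => if h : (j : X) ∈ S then v ⟨j, h⟩ else 0 with hw
  -- key sum identity
  have key : ∀ y : X, (fun j : S => K y j) ⬝ᵥ v = (fun j : T => K y j) ⬝ᵥ w := by
    intro y
    have h1 : ((fun j : T => K y j) ⬝ᵥ w) =
        ∑ j ∈ T, (if h : j ∈ S then K y j * v ⟨j, h⟩ else 0) := by
      rw [dotProduct, ← Finset.sum_attach T (fun j => if h : j ∈ S then K y j * v ⟨j, h⟩ else 0)]
      refine Finset.sum_congr rfl fun j _ => ?_
      simp only [hw]
      by_cases h : (j : X) ∈ S <;> simp [h]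
    have h2 : ∑ j ∈ T, (if h : j ∈ S then K y j * v ⟨j, h⟩ else 0)
        = ∑ j ∈ S, (if h : j ∈ S then K y j * v ⟨j, h⟩ else 0) := by
      refine (Finset.sum_subset hST fun j _ hj => ?_).symm
      simp [hj]
    have h3 : ∑ j ∈ S, (if h : j ∈ S then K y j * v ⟨j, h⟩ else 0)
        = ∑ j : S, K y j * v j := by
      rw [← Finset.sum_attach S (fun j => if h : j ∈ S then K y j * v ⟨j, h⟩ else 0)]
      exact Finset.sum_congr rfl fun j _ => by simp
    rw [h1, h2, h3, dotProduct]
  -- Gram matrix of T applied to w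
  have hKw : (gramMatrix K T).mulVec w = fun j : T => (fun i : S => K j i) ⬝ᵥ v := by
    funext j
    simp only [Matrix.mulVec, gramMatrix, Matrix.of_apply]
    rw [← key j]
  have hinv : (gramMatrix K T)⁻¹.mulVec ((gramMatrix K T).mulVec w) = w := by
    rw [Matrix.mulVec_mulVec, Matrix.nonsing_inv_mul _ hT, Matrix.one_mulVec]
  have hdiff : (fun j : T => Y j - (f₀ j + (fun i : S => K (j : X) i) ⬝ᵥ v))
      = (fun j : T => Y j - f₀ j) - (gramMatrix K T).mulVec w := by
    funext j
    simp only [hKw, Pi.sub_apply]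
    ring
  simp only [krUpdate, ← hv]
  rw [hdiff, Matrix.mulVec_sub, hinv, dotProduct_sub, key x]
  ring
end

section
/- Warm-start equals cold-start for kernel regression along a nested chain (Theorem 1): Let S₀ ⊆ S₁ ⊆ ⋯ ⊆ S_{C−1} be a monotone chain of finite subsets of X such that every Gram matrix K_{S_i} is invertible. Let f₀ : X → ℝ be arbitrary and define recursively f_{i+1} as the kernel-regression update of f_i on S_i, for i = 0, …, C−1. Then f_C equals the kernel-regression update of f₀ on S_{C−1}: sequentially retraining (warm-starting) on the increasing datasets S₀, …, S_{C−1} produces, at every point x ∈ X, the same prediction as training from scratch on the largest dataset S_{C−1} alone. -/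
open Matrix

lemma kr_aux {X : Type*} [DecidableEq X] (K : X → X → ℝ) (Y : X → ℝ)
    (f : X → ℝ) (T S : Finset X) (hTS : T ⊆ S) (hS : IsUnit (gramMatrix K S).det)
    (β : T → ℝ) :
    krUpdate K Y (fun x => f x + ∑ j : T, K x j * β j) S = krUpdate K Y f S := by
  classical
  set b : X → ℝ := fun j => if h : j ∈ T then β ⟨j, h⟩ else 0 with hb
  set α : S → ℝ := fun j => b j with hα
  have hsum : ∀ x : X, ∑ j : T, K x j * β j = (fun j : S => K x j) ⬝ᵥ α := by
    intro x
    have h1 : ∑ j : T, K x j * β j = ∑ j ∈ T, K x j * b j := by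
      rw [← Finset.sum_coe_sort T (fun j => K x j * b j)]
      refine Finset.sum_congr rfl ?_
      intro j _
      simp [hb, j.2]
    have h2 : (fun j : S => K x j) ⬝ᵥ α = ∑ j ∈ S, K x j * b j := by
      rw [dotProduct, ← Finset.sum_coe_sort S (fun j => K x j * b j)]
    rw [h1, h2]
    refine Finset.sum_subset hTS ?_
    intro j _ hj
    simp [hb, hj]
  have hA : (gramMatrix K S).mulVec α = fun i : S => ∑ j : T, K (i : X) j * β j := by
    funext i
    rw [hsum (i : X)]
    rfl
  funext x
  simp only [krUpdate]
  have hvec : (fun j : S => Y j - (f j + ∑ k : T, K (j : X) k * β k))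
      = (fun j : S => Y j - f j) - (gramMatrix K S).mulVec α := by
    funext j
    simp [hA]
    ring
  rw [hvec, Matrix.mulVec_sub, Matrix.mulVec_mulVec, Matrix.nonsing_inv_mul _ hS,
    Matrix.one_mulVec, dotProduct_sub, hsum x]
  ring

lemma kr_absorb {X : Type*} [DecidableEq X] (K : X → X → ℝ) (Y : X → ℝ)
    (f : X → ℝ) (T S : Finset X) (hTS : T ⊆ S) (hS : IsUnit (gramMatrix K S).det) :
    krUpdate K Y (krUpdate K Y f T) S = krUpdate K Y f S := by
  have : krUpdate K Y f T = fun x => f x +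
      ∑ j : T, K x j * ((gramMatrix K T)⁻¹.mulVec (fun j : T => Y j - f j)) j := by
    funext x; simp [krUpdate, dotProduct]
  rw [this, kr_aux K Y f T S hTS hS]

/-- Warm-start equals cold-start along a nested chain (Theorem 1): sequentially
retraining on the increasing datasets `S 0 ⊆ S 1 ⊆ ⋯ ⊆ S (C-1)` produces the same
predictor as training from scratch on the largest dataset `S (C-1)` alone. -/
theorem warm_start_eq_cold_start_chain {X : Type*} [DecidableEq X]
    (K : X → X → ℝ) (Y : X → ℝ) (C : ℕ) (hC : 0 < C)
    (S : Fin C → Finset X)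
    (hmono : ∀ i j : Fin C, i ≤ j → S i ⊆ S j)
    (hinv : ∀ i : Fin C, IsUnit (gramMatrix K (S i)).det)
    (f : ℕ → (X → ℝ))
    (hstep : ∀ i : Fin C, f ((i : ℕ) + 1) = krUpdate K Y (f i) (S i)) :
    f C = krUpdate K Y (f 0) (S ⟨C - 1, by omega⟩) := by
  have key : ∀ n : ℕ, ∀ h : n < C, f (n + 1) = krUpdate K Y (f 0) (S ⟨n, h⟩) := by
    intro n
    induction n with
    | zero => intro h; exact hstep ⟨0, h⟩
    | succ n ih =>
      intro h
      have hn : n < C := by omega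
      have h1 : f (n + 2) = krUpdate K Y (f (n + 1)) (S ⟨n + 1, h⟩) := hstep ⟨n + 1, h⟩
      rw [h1, ih hn, kr_absorb K Y (f 0) (S ⟨n, hn⟩) (S ⟨n + 1, h⟩)
        (hmono _ _ (by simp [Fin.le_def])) (hinv _)]
  have h := key (C - 1) (by omega)
  rwa [show C - 1 + 1 = C by omega] at h
end

section
/- Convergence of the test-point prediction to the fully trained network (eq. (4) converges to eq. (5)): If K : Matrix (Fin n) (Fin n) ℝ is positive definite (K.PosDef), then for all a, Y, v₀ : Fin n → ℝ and c₀ : ℝ, the function h t := c₀ + a ⬝ᵥ (K⁻¹.mulVec ((1 − exp (−t • K)).mulVec (Y − v₀))) tends, as t → ∞, to the limit c₀ + a ⬝ᵥ (K⁻¹.mulVec (Y − v₀)), which is the prediction of the fully trained kernel-regression model at the test point. -/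
/-- The matrix exponential (`Matrix.exp` in later Mathlib): the exponential in the
topological algebra of square matrices. -/
noncomputable def Matrix.exp (𝕂 : Type*) {n : ℕ} [Field 𝕂] [TopologicalSpace 𝕂]
    [IsTopologicalRing 𝕂] (A : Matrix (Fin n) (Fin n) 𝕂) : Matrix (Fin n) (Fin n) 𝕂 :=
  (NormedSpace.expSeries 𝕂 (Matrix (Fin n) (Fin n) 𝕂)).sum A

open Matrix Filter

lemma exp_neg_smul_tendsto_zero (n : ℕ) (K : Matrix (Fin n) (Fin n) ℝ)
    (hK : K.PosDef) :
    Tendsto (fun t : ℝ => NormedSpace.exp (-t • K)) atTop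
      (nhds (0 : Matrix (Fin n) (Fin n) ℝ)) := by
  have hH := hK.1
  set U : Matrix (Fin n) (Fin n) ℝ := (hH.eigenvectorUnitary : Matrix (Fin n) (Fin n) ℝ) with hUdef
  have hUU' : U * star U = 1 := (Matrix.mem_unitaryGroup_iff).mp hH.eigenvectorUnitary.2
  have hUU : star U * U = 1 := (Matrix.mem_unitaryGroup_iff').mp hH.eigenvectorUnitary.2
  have hU : IsUnit U := isUnit_iff_exists.mpr ⟨star U, hUU', hUU⟩
  have hUinv : U⁻¹ = star U := Matrix.inv_eq_right_inv hUU'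
  have hspec : K = U * Matrix.diagonal (RCLike.ofReal ∘ hH.eigenvalues) * star U :=
    hH.spectral_theorem
  have hexp : ∀ t : ℝ, NormedSpace.exp (-t • K) =
      U * Matrix.diagonal (fun i => Real.exp (-t * hH.eigenvalues i)) * U⁻¹ := by
    intro t
    have h1 : -t • K = U * Matrix.diagonal (fun i => -t * hH.eigenvalues i) * U⁻¹ := by
      rw [hUinv]
      conv_lhs => rw [hspec]
      rw [← smul_mul_assoc, ← mul_smul_comm]
      congr 2
      ext i j
      by_cases h : i = j <;>
        simp [Matrix.diagonal, h, mul_comm]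
    rw [h1, Matrix.exp_conj U _ hU, Matrix.exp_diagonal, Pi.exp_def]
    simp [Real.exp_eq_exp_ℝ]
  have hdiag : Tendsto (fun t : ℝ =>
      Matrix.diagonal (fun i => Real.exp (-t * hH.eigenvalues i))) atTop
      (nhds (0 : Matrix (Fin n) (Fin n) ℝ)) := by
    have hfun : Tendsto (fun t : ℝ => (fun i => Real.exp (-t * hH.eigenvalues i)))
        atTop (nhds (0 : Fin n → ℝ)) := by
      rw [tendsto_pi_nhds]
      intro i
      have hpos := hK.eigenvalues_pos i
      have hbot : Tendsto (fun t : ℝ => -t * hH.eigenvalues i) atTop atBot := by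
        have h1 : Tendsto (fun t : ℝ => t * hH.eigenvalues i) atTop atTop :=
          Tendsto.atTop_mul_const hpos tendsto_id
        simpa [Function.comp_def, neg_mul] using tendsto_neg_atTop_atBot.comp h1
      exact Real.tendsto_exp_atBot.comp hbot
    have hcont : Continuous (fun v : Fin n → ℝ => Matrix.diagonal v) :=
      continuous_id.matrix_diagonal
    have h2 := (hcont.tendsto 0).comp hfun
    have h0 : Matrix.diagonal (0 : Fin n → ℝ) = 0 := Matrix.diagonal_zero
    simpa only [Function.comp_def, h0] using h2
  have hmul : Tendsto (fun t : ℝ =>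
      U * Matrix.diagonal (fun i => Real.exp (-t * hH.eigenvalues i)) * U⁻¹) atTop
      (nhds (U * (0 : Matrix (Fin n) (Fin n) ℝ) * U⁻¹)) :=
    (tendsto_const_nhds.mul hdiag).mul tendsto_const_nhds
  simp only [mul_zero, zero_mul] at hmul
  simpa only [← hexp] using hmul

/-- Convergence of the test-point prediction to the fully trained network
(eq. (4) converges to eq. (5)): for positive definite `K`, the test-point prediction
`h t = c₀ + a ⬝ᵥ K⁻¹ (1 − exp (−t • K)) (Y − v₀)` tends to the fully trained
kernel-regression prediction `c₀ + a ⬝ᵥ K⁻¹ (Y − v₀)` as `t → ∞`. -/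
theorem test_point_converges (n : ℕ) (K : Matrix (Fin n) (Fin n) ℝ)
    (hK : K.PosDef) (a Y v₀ : Fin n → ℝ) (c₀ : ℝ) :
    Tendsto (fun t : ℝ => c₀ +
        a ⬝ᵥ K⁻¹.mulVec ((1 - Matrix.exp ℝ (-t • K)).mulVec (Y - v₀)))
      atTop (nhds (c₀ + a ⬝ᵥ K⁻¹.mulVec (Y - v₀))) := by
  have hc : Continuous (fun M : Matrix (Fin n) (Fin n) ℝ =>
      c₀ + a ⬝ᵥ K⁻¹.mulVec ((1 - M).mulVec (Y - v₀))) := by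
    apply continuous_const.add
    exact continuous_const.dotProduct
      (continuous_const.matrix_mulVec
        ((continuous_const.sub continuous_id).matrix_mulVec continuous_const))
  have hkey := (hc.tendsto 0).comp (exp_neg_smul_tendsto_zero n K hK)
  have hE : ∀ M : Matrix (Fin n) (Fin n) ℝ, Matrix.exp ℝ M = NormedSpace.exp M := fun M => by
    rw [Matrix.exp, NormedSpace.exp_eq_expSeries_sum ℝ]
  simpa [hE, Function.comp_def, Matrix.one_mulVec] using hkey
end

section
/- Strict decrease of the residual norm for positive definite kernels: If K : Matrix (Fin n) (Fin n) ℝ is positive definite (K.PosDef) and v : Fin n → ℝ is nonzero, then the function t ↦ ‖(exp (−t • K)).mulVec v‖ is strictly antitone on [0, ∞) (StrictAntiOn on Set.Ici 0). -/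
open Matrix

/-- The Euclidean (`ℓ²`) norm of a vector in `Fin n → ℝ`. -/
noncomputable def euclNorm {n : ℕ} (v : Fin n → ℝ) : ℝ :=
  ‖(WithLp.equiv 2 (Fin n → ℝ)).symm v‖

attribute [local instance] Matrix.linftyOpNormedRing Matrix.linftyOpNormedAlgebra

lemma euclNorm_eq {n : ℕ} (w : Fin n → ℝ) :
    euclNorm w = Real.sqrt (∑ i, w i * w i) := by
  rw [euclNorm, EuclideanSpace.norm_eq]
  congr 1
  refine Finset.sum_congr rfl fun i _ => ?_
  simp [PiLp.toLp_apply, Real.norm_eq_abs, sq, abs_mul_abs_self]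

lemma aux_hasDerivAt {n : ℕ} (K : Matrix (Fin n) (Fin n) ℝ) (v : Fin n → ℝ) (t : ℝ) :
    HasDerivAt
      (fun t : ℝ => ∑ i, (NormedSpace.exp (t • (-K))).mulVec v i *
        (NormedSpace.exp (t • (-K))).mulVec v i)
      (-(2 * (K.mulVec ((NormedSpace.exp (t • (-K))).mulVec v) ⬝ᵥ
        (NormedSpace.exp (t • (-K))).mulVec v))) t := by
  have hE : HasDerivAt (fun u : ℝ => NormedSpace.exp (u • (-K)))
      ((-K) * NormedSpace.exp (t • (-K))) t := hasDerivAt_exp_smul_const' (-K) t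
  set E := NormedSpace.exp (t • (-K)) with hEdef
  have hcoord : ∀ i, HasDerivAt (fun u : ℝ => (NormedSpace.exp (u • (-K))).mulVec v i)
      (((-K) * E).mulVec v i) t := by
    intro i
    let L : Matrix (Fin n) (Fin n) ℝ →ₗ[ℝ] ℝ :=
      { toFun := fun M => M.mulVec v i
        map_add' := by intro M N; simp [Matrix.add_mulVec]
        map_smul' := by intro c M; simp [Matrix.smul_mulVec] }
    exact (L.toContinuousLinearMap.hasFDerivAt.comp_hasDerivAt t hE)
  have hsum : HasDerivAt
      (fun u : ℝ => ∑ i, (NormedSpace.exp (u • (-K))).mulVec v i *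
        (NormedSpace.exp (u • (-K))).mulVec v i)
      (∑ i, (((-K) * E).mulVec v i * E.mulVec v i + E.mulVec v i * ((-K) * E).mulVec v i)) t :=
    HasDerivAt.fun_sum fun i _ => (hcoord i).mul (hcoord i)
  convert hsum using 1
  have hm : ((-K) * E).mulVec v = -(K.mulVec (E.mulVec v)) := by
    rw [← Matrix.mulVec_mulVec, Matrix.neg_mulVec]
  rw [hm]
  have h2 : ∀ i, (-(K *ᵥ (E *ᵥ v))) i * (E *ᵥ v) i + (E *ᵥ v) i * (-(K *ᵥ (E *ᵥ v))) i
      = -(2 * ((K *ᵥ (E *ᵥ v)) i * (E *ᵥ v) i)) := fun i => by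
    simp only [Pi.neg_apply]; ring
  simp only [h2, dotProduct, Finset.mul_sum, ← Finset.sum_neg_distrib, mul_assoc]

/-- Strict decrease of the residual norm for positive definite kernels: for
positive definite `K` and nonzero `v`, the Euclidean norm of the residual
`exp (−t • K) v` is strictly antitone on `[0, ∞)`. -/
theorem residual_norm_strictAnti (n : ℕ) (K : Matrix (Fin n) (Fin n) ℝ)
    (hK : K.PosDef) (v : Fin n → ℝ) (hv : v ≠ 0) :
    StrictAntiOn (fun t : ℝ => euclNorm ((Matrix.exp ℝ (-t • K)).mulVec v)) (Set.Ici 0) := by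
  have hrw : ∀ t : ℝ, (-t) • K = t • (-K) := fun t => by rw [neg_smul, smul_neg]
  set g : ℝ → ℝ := fun t => ∑ i, (NormedSpace.exp (t • (-K))).mulVec v i *
      (NormedSpace.exp (t • (-K))).mulVec v i with hg
  have hu_ne : ∀ t : ℝ, (NormedSpace.exp (t • (-K))).mulVec v ≠ 0 := by
    intro t h
    have hUnit : IsUnit (NormedSpace.exp (t • (-K))) := Matrix.isUnit_exp _
    have hinj := Matrix.mulVec_injective_iff_isUnit.2 hUnit
    apply hv
    apply hinj
    rw [h, Matrix.mulVec_zero]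
  have hg_anti : StrictAntiOn g (Set.Ici 0) := by
    apply strictAntiOn_of_deriv_neg (convex_Ici 0)
    · exact Continuous.continuousOn (by
        exact continuous_iff_continuousAt.2 fun t => (aux_hasDerivAt K v t).continuousAt)
    · intro x _
      rw [(aux_hasDerivAt K v x).deriv]
      have hpos : 0 < K.mulVec ((NormedSpace.exp (x • (-K))).mulVec v) ⬝ᵥ
          (NormedSpace.exp (x • (-K))).mulVec v := by
        have := hK.dotProduct_mulVec_pos (hu_ne x)
        simpa [dotProduct_comm] using this
      linarith
  intro s hs t ht hst
  have hgt : g t < g s := hg_anti hs ht hst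
  have hnn : 0 ≤ g t := Finset.sum_nonneg fun i _ => mul_self_nonneg _
  have : euclNorm ((Matrix.exp ℝ (-t • K)).mulVec v) = Real.sqrt (g t) := by
    rw [Matrix.exp, ← NormedSpace.exp_eq_expSeries_sum ℝ, hrw, euclNorm_eq]
  rw [show (fun t : ℝ => euclNorm ((Matrix.exp ℝ (-t • K)).mulVec v)) =
      fun t : ℝ => Real.sqrt (g t) from funext fun t => by rw [Matrix.exp, ← NormedSpace.exp_eq_expSeries_sum ℝ, hrw, euclNorm_eq]]
  exact Real.sqrt_lt_sqrt hnn hgt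
end

section
/- Exponential decay of the residual under an eigenvalue lower bound: Let K : Matrix (Fin n) (Fin n) ℝ be symmetric (K.IsSymm) and let λ > 0 satisfy λ * ‖x‖² ≤ x ⬝ᵥ K.mulVec x for every x : Fin n → ℝ. Then for every v : Fin n → ℝ and every t ≥ 0, ‖(exp (−t • K)).mulVec v‖ ≤ Real.exp (−λ * t) * ‖v‖. -/
open Matrix
open scoped Matrix RealInnerProductSpace

/-- Exponential decay of the residual under an eigenvalue lower bound: if `K` is
symmetric and `λ * ‖x‖² ≤ ⟨x, K x⟩` for all `x` with `λ > 0`, then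
`‖exp (−t • K) v‖ ≤ exp (−λ t) ‖v‖` for all `t ≥ 0`. -/
theorem residual_exponential_decay (n : ℕ) (K : Matrix (Fin n) (Fin n) ℝ)
    (hsymm : K.IsSymm) (lam : ℝ) (hlam : 0 < lam)
    (hbound : ∀ x : Fin n → ℝ, lam * (euclNorm x) ^ 2 ≤ x ⬝ᵥ K.mulVec x)
    (v : Fin n → ℝ) (t : ℝ) (ht : 0 ≤ t) :
    euclNorm ((Matrix.exp ℝ (-t • K)).mulVec v) ≤ Real.exp (-lam * t) * euclNorm v := by
  letI : NormedRing (Matrix (Fin n) (Fin n) ℝ) := Matrix.linftyOpNormedRing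
  letI : NormedAlgebra ℝ (Matrix (Fin n) (Fin n) ℝ) := Matrix.linftyOpNormedAlgebra
  let e : (Fin n → ℝ) ≃ₗ[ℝ] EuclideanSpace ℝ (Fin n) :=
    (WithLp.linearEquiv 2 ℝ (Fin n → ℝ)).symm
  have he : ∀ a b : Fin n → ℝ, ⟪e a, e b⟫ = a ⬝ᵥ b := by
    intro a b
    simp [PiLp.inner_apply, dotProduct, e, WithLp.linearEquiv, mul_comm]
  have hen : ∀ a : Fin n → ℝ, ‖e a‖ = euclNorm a := fun a => rfl
  let L0 : Matrix (Fin n) (Fin n) ℝ →ₗ[ℝ] EuclideanSpace ℝ (Fin n) :=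
    { toFun := fun M => e (M.mulVec v)
      map_add' := fun A B => by simp [Matrix.add_mulVec]
      map_smul' := fun c A => by simp [Matrix.smul_mulVec] }
  let L := L0.toContinuousLinearMap
  let x : ℝ → (Fin n → ℝ) := fun s => (NormedSpace.exp (s • (-K))).mulVec v
  let u : ℝ → EuclideanSpace ℝ (Fin n) := fun s => e (x s)
  have hcomm : ∀ s : ℝ, NormedSpace.exp (s • (-K)) * (-K)
      = (-K) * NormedSpace.exp (s • (-K)) := fun s =>
    (((Commute.refl (-K)).smul_left s).exp_left).eq
  have hu' : ∀ s, HasDerivAt u (-(e (K.mulVec (x s)))) s := by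
    intro s
    have h1 := hasDerivAt_exp_smul_const (𝕂 := ℝ) (-K) s
    have h2 := L.hasFDerivAt.comp_hasDerivAt s h1
    have h3 : L (NormedSpace.exp (s • (-K)) * (-K)) = -(e (K.mulVec (x s))) := by
      rw [hcomm s]
      show e (((-K) * NormedSpace.exp (s • (-K))).mulVec v) = _
      rw [← Matrix.mulVec_mulVec, Matrix.neg_mulVec]
      simp [x]
    exact h2.congr_deriv h3
  -- the Lyapunov function
  set g : ℝ → ℝ := fun s => Real.exp (2 * lam * s) * ⟪u s, u s⟫ with hg
  have hxn : ∀ s, ⟪u s, u s⟫ = euclNorm (x s) ^ 2 := fun s => by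
    rw [real_inner_self_eq_norm_sq]; rfl
  have hD : ∀ s : ℝ, HasDerivAt g
      ((Real.exp (2 * lam * s) * (2 * lam * 1)) * ⟪u s, u s⟫
        + Real.exp (2 * lam * s)
          * (⟪u s, -(e (K.mulVec (x s)))⟫ + ⟪-(e (K.mulVec (x s))), u s⟫)) s := by
    intro s
    exact (((hasDerivAt_id s).const_mul (2 * lam)).exp).mul ((hu' s).inner ℝ (hu' s))
  have hgderiv_nonpos : ∀ s : ℝ, deriv g s ≤ 0 := by
    intro s
    rw [(hD s).deriv]
    have hux : ⟪u s, -(e (K.mulVec (x s)))⟫ = -((x s) ⬝ᵥ K.mulVec (x s)) := by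
      rw [inner_neg_right, he]
    have huy : ⟪-(e (K.mulVec (x s))), u s⟫ = -((x s) ⬝ᵥ K.mulVec (x s)) := by
      rw [inner_neg_left, he, dotProduct_comm]
    rw [hxn s, hux, huy]
    have hb := hbound (x s)
    have hepos : (0:ℝ) < Real.exp (2 * lam * s) := Real.exp_pos _
    nlinarith [hepos, hb]
  have hanti : AntitoneOn g (Set.Ici (0:ℝ)) := by
    apply antitoneOn_of_deriv_nonpos (convex_Ici 0)
    · exact fun s _ => ((hD s).continuousAt).continuousWithinAt
    · exact fun s _ => ((hD s).differentiableAt).differentiableWithinAt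
    · exact fun s _ => hgderiv_nonpos s
  have hkey : g t ≤ g 0 := hanti (Set.self_mem_Ici) ht ht
  have hx0 : x 0 = v := by simp [x]
  have hg0 : g 0 = euclNorm v ^ 2 := by
    simp only [hg]
    rw [hxn 0, hx0]
    norm_num
  have hgt : g t = Real.exp (2 * lam * t) * euclNorm (x t) ^ 2 := by
    simp only [hg]
    rw [hxn t]
  rw [hg0, hgt] at hkey
  have hxt : (Matrix.exp ℝ (-t • K)).mulVec v = x t := by
    simp only [Matrix.exp, x, neg_smul, smul_neg, NormedSpace.exp_eq_expSeries_sum ℝ]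
  rw [hxt]
  have hexp2 : Real.exp (-lam * t) ^ 2 * Real.exp (2 * lam * t) = 1 := by
    rw [sq, ← Real.exp_add, ← Real.exp_add, ← Real.exp_zero]
    ring_nf
  have h2 : 0 ≤ Real.exp (-lam * t) * euclNorm v :=
    mul_nonneg (Real.exp_pos _).le (norm_nonneg _)
  have h3 : 0 ≤ euclNorm (x t) := norm_nonneg _
  have hsq : euclNorm (x t) ^ 2 ≤ (Real.exp (-lam * t) * euclNorm v) ^ 2 := by
    nlinarith [mul_le_mul_of_nonneg_left hkey (sq_nonneg (Real.exp (-lam * t))), hexp2]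
  calc euclNorm (x t) = Real.sqrt (euclNorm (x t) ^ 2) := (Real.sqrt_sq h3).symm
    _ ≤ Real.sqrt ((Real.exp (-lam * t) * euclNorm v) ^ 2) := Real.sqrt_le_sqrt hsq
    _ = Real.exp (-lam * t) * euclNorm v := Real.sqrt_sq h2
end
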